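/- Let λ be a partition with exactly r−1 non-empty successive Durfee squares of sizes d_{1} ≥ … ≥ d_{r−1}, and consider also its bottom dissection into successive bottom squares. Then for all 1 ≤ j ≤ r−1, h^D_j ≤ h^B_j < h^D_{j+1}, where h^B_j = b_1 + … + b_j is the cumulative height of the first j bottom squares and h^D_j = d_{r−1} + … + d_{r−j} is the cumulative height of the last j Durfee squares (with h^D_r = +∞). Moreover h^D_j = h^B_j if and only if, for each of the last j Durfee squares, the partition to its right has strictly fewer parts than the size of that square. -/

import Mathlib

/-- A partition of `n`: a non-increasing list of positive integers summing to `n`. -/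
def IsPartitionOf (n : ℕ) (l : List ℕ) : Prop :=
  l.Pairwise (· ≥ ·) ∧ (∀ x ∈ l, 0 < x) ∧ l.sum = n

/-- The size of the Durfee square of a partition (given as a list of parts):
the largest `k` such that the first `k` parts are all `≥ k`. -/
def durfSq (l : List ℕ) : ℕ :=
  Nat.findGreatest (fun k => k ≤ l.length ∧ ∀ j < k, k ≤ l.getD j 0) l.length

/-- The parameter `k` of the horizontal Durfee rectangle (`k` columns, `k − 1` rows):
the largest `k` with `k − 1 ≤` the number of parts and the first `k − 1` parts all `≥ k`.
A `1 × 0` rectangle (`k = 1`) is always allowed. -/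
def durfRectH (l : List ℕ) : ℕ :=
  Nat.findGreatest (fun k => k - 1 ≤ l.length ∧ ∀ j < k - 1, k ≤ l.getD j 0) (l.length + 1)

/-- Remove `m` successive Durfee squares from the top of the partition. -/
def sqSteps : ℕ → List ℕ → List ℕ
  | 0, l => l
  | m + 1, l => sqSteps m (l.drop (durfSq l))

/-- Remove `m` successive horizontal Durfee rectangles from the top of the partition. -/
def rectSteps : ℕ → List ℕ → List ℕ
  | 0, l => l
  | m + 1, l => rectSteps m (l.drop (durfRectH l - 1))

/-- Remove `m` successive bottom squares from the bottom of the partition: a bottom square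
has side equal to the smallest part, and occupies that many rows at the bottom. -/
def botSqSteps : ℕ → List ℕ → List ℕ
  | 0, l => l
  | m + 1, l => botSqSteps m (l.take (l.length - l.getLastD 0))

/-- Remove `m` successive bottom rectangles (of size `λ_s × (λ_s − 1)`) from the bottom. -/
def botRectSteps : ℕ → List ℕ → List ℕ
  | 0, l => l
  | m + 1, l => botRectSteps m (l.take (l.length - (l.getLastD 0 - 1)))


/-- Size of the `j`-th Durfee square (`1`-indexed). -/
def dSize (l : List ℕ) (j : ℕ) : ℕ := durfSq (sqSteps (j - 1) l)

/-- Size of the `j`-th bottom square (`1`-indexed): the smallest part of what remains after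
removing the first `j − 1` bottom squares. -/
def bSize (l : List ℕ) (j : ℕ) : ℕ := (botSqSteps (j - 1) l).getLastD 0

/-- `h^B_j = b_1 + ⋯ + b_j`, the height of the top of the `j`-th bottom square. -/
def hB (l : List ℕ) (j : ℕ) : ℕ := ∑ k ∈ Finset.Icc 1 j, bSize l k

/-- `h^D_j = d_{r−1} + ⋯ + d_{r−j}`, the height (from the bottom) of the top of the
`(r−j)`-th Durfee square. -/
def hD (l : List ℕ) (r j : ℕ) : ℕ := ∑ k ∈ Finset.Icc 1 j, dSize l (r - k)

/-- The number of parts of `μ_m`, the sub-partition to the right of the `m`-th Durfee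
square. -/
def muLen (l : List ℕ) (m : ℕ) : ℕ :=
  ((sqSteps (m - 1) l).take (dSize l m)).countP (fun x => decide (dSize l m < x))

section helpers

lemma sqSteps_succ' (m : ℕ) (l : List ℕ) :
    sqSteps (m+1) l = (sqSteps m l).drop (durfSq (sqSteps m l)) := by
  induction m generalizing l with
  | zero => rfl
  | succ m ih =>
    show sqSteps (m+1) (l.drop (durfSq l)) = _
    rw [ih]; rfl

lemma botSqSteps_succ' (m : ℕ) (l : List ℕ) :
    botSqSteps (m+1) l =
      (botSqSteps m l).take ((botSqSteps m l).length - (botSqSteps m l).getLastD 0) := by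
  induction m generalizing l with
  | zero => rfl
  | succ m ih =>
    show botSqSteps (m+1) (l.take _) = _
    rw [ih]; rfl

lemma durfSq_le_length (l : List ℕ) : durfSq l ≤ l.length := Nat.findGreatest_le _

lemma durfSq_getD (l : List ℕ) {j : ℕ} (h : j < durfSq l) : durfSq l ≤ l.getD j 0 := by
  have h0 : (fun k => k ≤ l.length ∧ ∀ j < k, k ≤ l.getD j 0) 0 := by simp
  have := Nat.findGreatest_spec (P := fun k => k ≤ l.length ∧ ∀ j < k, k ≤ l.getD j 0)
    (Nat.zero_le l.length) h0
  exact this.2 j h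

lemma sorted_getD {l : List ℕ} (hs : l.Pairwise (· ≥ ·)) {i j : ℕ} (hij : i ≤ j)
    (hj : j < l.length) : l.getD j 0 ≤ l.getD i 0 := by
  rw [List.getD_eq_getElem l 0 hj, List.getD_eq_getElem l 0 (lt_of_le_of_lt hij hj)]
  rcases eq_or_lt_of_le hij with rfl | hlt
  · exact le_refl _
  · exact List.pairwise_iff_getElem.1 hs i j (lt_of_le_of_lt hij hj) hj hlt

lemma durfSq_max {l : List ℕ} (hs : l.Pairwise (· ≥ ·)) (h : durfSq l < l.length) :
    l.getD (durfSq l) 0 ≤ durfSq l := by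
  by_contra hc
  push_neg at hc
  have hgr := Nat.findGreatest_is_greatest
    (P := fun k => k ≤ l.length ∧ ∀ j < k, k ≤ l.getD j 0) (n := l.length)
    (lt_add_one (durfSq l)) h
  apply hgr
  refine ⟨h, fun j hj => ?_⟩
  exact le_trans hc (sorted_getD hs (Nat.lt_succ_iff.1 hj) h)

lemma getD_drop' (l : List ℕ) (a t : ℕ) : (l.drop a).getD t 0 = l.getD (a + t) 0 := by
  by_cases h : a + t < l.length
  · rw [List.getD_eq_getElem _ 0 (by simpa [Nat.lt_sub_iff_add_lt'] using h :
      t < (l.drop a).length), List.getD_eq_getElem l 0 h]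
    simp [List.getElem_drop]
  · rw [List.getD_eq_default, List.getD_eq_default] <;> simp at h ⊢ <;> omega

lemma getD_take' (l : List ℕ) {a t : ℕ} (h : t < a) : (l.take a).getD t 0 = l.getD t 0 := by
  by_cases ht : t < l.length
  · rw [List.getD_eq_getElem _ 0 (by simp; omega : t < (l.take a).length),
      List.getD_eq_getElem l 0 ht]
    simp [List.getElem_take]
  · rw [List.getD_eq_default, List.getD_eq_default] <;> simp at ht ⊢ <;> omega

lemma getLastD_eq_getD (l : List ℕ) : l.getLastD 0 = l.getD (l.length - 1) 0 := by
  rw [List.getLastD_eq_getLast?, List.getLast?_eq_getElem?, List.getD_eq_getElem?_getD]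

lemma drop_durfSq_le {l : List ℕ} (hs : l.Pairwise (· ≥ ·)) {x : ℕ}
    (hx : x ∈ l.drop (durfSq l)) : x ≤ durfSq l := by
  obtain ⟨i, hi, rfl⟩ := List.mem_iff_getElem.1 hx
  have hlen : durfSq l + i < l.length := by
    have := hi; rw [List.length_drop] at this; omega
  have h1 : (l.drop (durfSq l))[i] = l.getD (durfSq l + i) 0 := by
    rw [List.getD_eq_getElem l 0 hlen]; simp [List.getElem_drop]
  rw [h1]
  have hd : durfSq l < l.length := by omega
  calc l.getD (durfSq l + i) 0 ≤ l.getD (durfSq l) 0 := sorted_getD hs (by omega) hlen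
    _ ≤ durfSq l := durfSq_max hs hd

lemma sqSteps_sorted {l : List ℕ} (hs : l.Pairwise (· ≥ ·)) (m : ℕ) :
    (sqSteps m l).Pairwise (· ≥ ·) := by
  induction m generalizing l with
  | zero => exact hs
  | succ m ih => exact ih (hs.sublist (List.drop_sublist _ _))

lemma sqSteps_eq_drop (m : ℕ) (l : List ℕ) :
    sqSteps m l = l.drop (l.length - (sqSteps m l).length) := by
  have : ∃ a, sqSteps m l = l.drop a := by
    induction m generalizing l with
    | zero => exact ⟨0, rfl⟩
    | succ m ih =>
      obtain ⟨a, ha⟩ := ih (l := l.drop (durfSq l))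
      refine ⟨durfSq l + a, ?_⟩
      have h1 : sqSteps (m+1) l = sqSteps m (l.drop (durfSq l)) := rfl
      rw [h1, ha, List.drop_drop]
  obtain ⟨a, ha⟩ := this
  by_cases h : a ≤ l.length
  · rw [ha]; congr 1; rw [List.length_drop]; omega
  · have hnil : sqSteps m l = [] := by rw [ha]; exact List.drop_eq_nil_of_le (by omega)
    rw [hnil]
    simp

lemma hB_succ (l : List ℕ) (j : ℕ) : hB l (j+1) = hB l j + bSize l (j+1) :=
  Finset.sum_Icc_succ_top (by omega) _

lemma hD_succ (l : List ℕ) (r j : ℕ) : hD l r (j+1) = hD l r j + dSize l (r - (j+1)) :=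
  Finset.sum_Icc_succ_top (by omega) _

lemma hD_mono (l : List ℕ) (r : ℕ) {j j' : ℕ} (h : j ≤ j') : hD l r j ≤ hD l r j' :=
  Finset.sum_le_sum_of_subset (Finset.Icc_subset_Icc_right h)

lemma length_sqSteps_succ (t : ℕ) (l : List ℕ) :
    (sqSteps t l).length = (sqSteps (t+1) l).length + durfSq (sqSteps t l) := by
  rw [sqSteps_succ', List.length_drop]
  have := durfSq_le_length (sqSteps t l)
  omega

lemma lenL (r : ℕ) (l : List ℕ) (hexact : sqSteps (r - 1) l = []) :
    ∀ s, s ≤ r - 1 → (sqSteps (r - 1 - s) l).length = hD l r s := by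
  intro s
  induction s with
  | zero => intro _; simp [hexact, hD]
  | succ s ih =>
    intro hs
    have hs' : s ≤ r - 1 := by omega
    have harith : r - 1 - (s+1) + 1 = r - 1 - s := by omega
    have h1 := length_sqSteps_succ (r - 1 - (s+1)) l
    rw [harith] at h1
    have h2 : durfSq (sqSteps (r - 1 - (s+1)) l) = dSize l (r - (s+1)) := by
      have : r - (s+1) - 1 = r - 1 - (s+1) := by omega
      rw [dSize, this]
    rw [h1, ih hs', h2, hD_succ]

lemma muLen_lt_iff (l : List ℕ) (m : ℕ) (hs : l.Pairwise (· ≥ ·))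
    (hd0 : 0 < dSize l m) (hdl : dSize l m ≤ (sqSteps (m-1) l).length) :
    muLen l m < dSize l m ↔ (sqSteps (m-1) l).getD (dSize l m - 1) 0 ≤ dSize l m := by
  obtain ⟨L, hL⟩ : ∃ L, sqSteps (m-1) l = L := ⟨_, rfl⟩
  obtain ⟨d, hd⟩ : ∃ d, dSize l m = d := ⟨_, rfl⟩
  have hmu : muLen l m = (L.take d).countP (fun x => decide (d < x)) := by
    rw [muLen, hL, hd]
  rw [hL, hd] at hdl ⊢
  rw [hd] at hd0
  have hsL : L.Pairwise (· ≥ ·) := hL ▸ sqSteps_sorted hs _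
  have hlen : (L.take d).length = d := by rw [List.length_take]; omega
  have hcount : muLen l m ≤ d := by
    rw [hmu]
    have := List.countP_le_length (l := L.take d) (p := fun x => decide (d < x))
    omega
  have hiff : muLen l m = d ↔ ∀ a ∈ L.take d, d < a := by
    have h2 := List.countP_eq_length (p := fun x => decide (d < x)) (l := L.take d)
    rw [hlen] at h2
    rw [hmu, h2]
    constructor
    · intro h a ha; simpa using h a ha
    · intro h a ha; simpa using h a ha
  constructor
  · intro h
    by_contra hc
    push_neg at hc
    have : muLen l m = d := by
      rw [hiff]
      intro a ha
      obtain ⟨i, hi, rfl⟩ := List.mem_iff_getElem.1 ha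
      rw [hlen] at hi
      have hiL : i < L.length := by omega
      have he : (L.take d)[i] = L.getD i 0 := by
        rw [List.getD_eq_getElem L 0 hiL]
        simp [List.getElem_take]
      rw [he]
      calc d < L.getD (d-1) 0 := hc
        _ ≤ L.getD i 0 := sorted_getD hsL (by omega) (by omega)
    omega
  · intro h
    have : ¬ (muLen l m = d) := by
      rw [hiff]
      push_neg
      refine ⟨L.getD (d-1) 0, ?_, by omega⟩
      have hdL : d - 1 < L.length := by omega
      rw [List.getD_eq_getElem L 0 hdL]
      have he : L[d-1] = (L.take d)[d-1]'(by omega) := by simp [List.getElem_take]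
      rw [he]
      exact List.getElem_mem _
    omega

lemma key (r n : ℕ) (hr : 2 ≤ r) (l : List ℕ) (hl : IsPartitionOf n l)
    (hpos : ∀ j, 1 ≤ j → j ≤ r - 1 → 0 < dSize l j)
    (hexact : sqSteps (r - 1) l = []) :
    ∀ j, j ≤ r - 1 →
      botSqSteps j l = l.take (l.length - hB l j) ∧
      hD l r j ≤ hB l j ∧
      (j < r - 1 → hB l j < hD l r (j + 1)) ∧
      (hD l r j = hB l j ↔ ∀ k, 1 ≤ k → k ≤ j → muLen l (r - k) < dSize l (r - k)) := by
  have hsort : l.Pairwise (· ≥ ·) := hl.1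
  have htot : l.length = hD l r (r-1) := by
    have := lenL r l hexact (r-1) le_rfl
    rw [Nat.sub_self] at this
    simp only [sqSteps] at this
    exact this
  intro j
  induction j with
  | zero =>
    intro _
    refine ⟨by simp [botSqSteps, hB], by simp [hB, hD], ?_, ?_⟩
    · intro h0
      have h1 : hD l r 1 = dSize l (r - 1) := by simp [hD]
      have h2 : 0 < dSize l (r-1) := hpos (r-1) (by omega) le_rfl
      simp [hB]
      omega
    · simp [hB, hD]
      omega
  | succ j ih =>
    intro hj1
    have hjlt : j < r - 1 := by omega
    obtain ⟨hPj, hlow, hupS, hiff⟩ := ih (by omega)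
    have hup : hB l j < hD l r (j+1) := hupS hjlt
    -- set up notation
    obtain ⟨m, hm⟩ : ∃ m, r - (j+1) = m := ⟨_, rfl⟩
    have hm1 : 1 ≤ m := by omega
    have hmr : m ≤ r - 1 := by omega
    obtain ⟨L', hL'⟩ : ∃ L, sqSteps (m-1) l = L := ⟨_, rfl⟩
    obtain ⟨d, hd⟩ : ∃ d, dSize l m = d := ⟨_, rfl⟩
    have hdurf : durfSq L' = d := by rw [← hL', ← hd]; rfl
    have hLlen : L'.length = hD l r (j+1) := by
      have harith : r - 1 - (j+1) = m - 1 := by omega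
      have := lenL r l hexact (j+1) hj1
      rw [harith, hL'] at this
      exact this
    have hd0 : 0 < d := hd ▸ hpos m hm1 hmr
    have hdlen : d ≤ L'.length := hdurf ▸ durfSq_le_length L'
    have hDsucc : hD l r (j+1) = hD l r j + d := by rw [hD_succ, hm, hd]
    have hmono : hD l r (j+1) ≤ l.length := htot ▸ hD_mono l r hj1
    -- compute b
    obtain ⟨b, hb⟩ : ∃ b, bSize l (j+1) = b := ⟨_, rfl⟩
    obtain ⟨t, htdef⟩ : ∃ t, hD l r (j+1) - hB l j - 1 = t := ⟨_, rfl⟩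
    have hAlen : (l.take (l.length - hB l j)).length = l.length - hB l j := by
      rw [List.length_take]; omega
    have hbd : b = l.getD (l.length - hB l j - 1) 0 := by
      rw [← hb]
      show (botSqSteps ((j+1) - 1) l).getLastD 0 = _
      rw [show (j+1) - 1 = j from rfl, hPj, getLastD_eq_getD, hAlen,
        getD_take' l (by omega)]
    have hdropL : L' = l.drop (l.length - L'.length) := by
      rw [← hL']; exact sqSteps_eq_drop (m-1) l
    have hbL : b = L'.getD t 0 := by
      rw [hbd, hdropL, getD_drop']
      congr 1
      omega
    have ht_lt : t < d := by omega
    have hb_ge : d ≤ b := by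
      rw [hbL, ← hdurf]
      exact durfSq_getD L' (hdurf ▸ ht_lt)
    have hBsucc : hB l (j+1) = hB l j + b := by rw [hB_succ, hb]
    -- prefix property
    have hprefix : botSqSteps (j+1) l = l.take (l.length - hB l (j+1)) := by
      rw [botSqSteps_succ', hPj, hAlen, getLastD_eq_getD, hAlen, getD_take' l (by omega),
        ← hbd, List.take_take]
      congr 1
      omega
    refine ⟨hprefix, by omega, ?_, ?_⟩
    · -- upper bound
      intro hj2
      have hm2 : 2 ≤ m := by omega
      obtain ⟨L'', hL''⟩ : ∃ L, sqSteps (m-2) l = L := ⟨_, rfl⟩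
      have hstep : L' = L''.drop (durfSq L'') := by
        rw [← hL', ← hL'']
        have h3 : m - 1 = (m-2) + 1 := by omega
        rw [h3]
        exact sqSteps_succ' (m-2) l
      have hsL'' : L''.Pairwise (· ≥ ·) := hL'' ▸ sqSteps_sorted hsort _
      have hbmem : b ∈ L' := by
        rw [hbL, List.getD_eq_getElem L' 0 (by omega)]
        exact List.getElem_mem _
      have hble : b ≤ durfSq L'' := drop_durfSq_le hsL'' (hstep ▸ hbmem)
      have hd' : durfSq L'' = dSize l (m-1) := by
        have h4 : dSize l (m-1) = durfSq (sqSteps (m-1-1) l) := rfl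
        rw [h4, show m-1-1 = m-2 from by omega, hL'']
      have hDsucc2 : hD l r ((j+1)+1) = hD l r (j+1) + dSize l (m-1) := by
        rw [hD_succ, show r - (j+1+1) = m - 1 from by omega]
      have hble' : b ≤ dSize l (m-1) := hd' ▸ hble
      omega
    · constructor
      · intro heq
        have h1 : hD l r j = hB l j := by omega
        have h2 : b = d := by omega
        intro k hk1 hkj
        rcases Nat.lt_or_ge k (j+1) with hk | hk
        · exact hiff.1 h1 k hk1 (by omega)
        · have hkeq : k = j+1 := by omega
          subst hkeq
          rw [hm]
          rw [muLen_lt_iff l m hsort (hd ▸ hd0) (by rw [hL', hd]; exact hdlen)]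
          rw [hL', hd]
          have ht : t = d - 1 := by omega
          rw [← ht, ← hbL]
          omega
      · intro hall
        have h1 : hD l r j = hB l j := hiff.2 (fun k hk1 hkj => hall k hk1 (by omega))
        have hmu := hall (j+1) (by omega) le_rfl
        rw [hm] at hmu
        rw [muLen_lt_iff l m hsort (hd ▸ hd0) (by rw [hL', hd]; exact hdlen)] at hmu
        rw [hL', hd] at hmu
        have ht : t = d - 1 := by omega
        have hble : b ≤ d := by rw [hbL, ht]; exact hmu
        omega


end helpers

/-- Proposition on heights for the all-squares dissections: if `λ` has exactly `r−1`
non-empty successive Durfee squares then `h^D_j ≤ h^B_j < h^D_{j+1}` for `1 ≤ j ≤ r−1`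
(the right inequality with the convention `h^D_r = +∞`, i.e. only for `j + 1 ≤ r − 1`),
and `h^D_j = h^B_j` iff each of the partitions `μ_{r−1}, …, μ_{r−j}` to the right of the
last `j` Durfee squares has strictly fewer parts than the size of the corresponding
square. -/
theorem heights_squares (r n : ℕ) (hr : 2 ≤ r) (l : List ℕ) (hl : IsPartitionOf n l)
    (hpos : ∀ j, 1 ≤ j → j ≤ r - 1 → 0 < dSize l j)
    (hexact : sqSteps (r - 1) l = []) :
    ∀ j, 1 ≤ j → j ≤ r - 1 →
      hD l r j ≤ hB l j ∧
      (j + 1 ≤ r - 1 → hB l j < hD l r (j + 1)) ∧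
      (hD l r j = hB l j ↔ ∀ k, 1 ≤ k → k ≤ j → muLen l (r - k) < dSize l (r - k)) := by
  intro j _ hj
  obtain ⟨-, h1, h2, h3⟩ := key r n hr l hl hpos hexact j hj
  exact ⟨h1, fun h => h2 (by omega), h3⟩
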